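/- Assume the V structure with P(X=x, C=c) > 0 for all x, c ∈ {0,1}, and define RD(c) := P(Y=1 | X=1, C=c) − P(Y=1 | X=0, C=c) and w_c := var(X | C=c)·P(C=c) / [ var(X | C=1)·P(C=1) + var(X | C=0)·P(C=0) ] for c ∈ {0,1}. (i) If X has strictly positive effects on C at both levels of Y and Y has strictly positive effects on C at both levels of X (i.e., p_{C=1|11} > p_{C=1|10}, p_{C=1|01} > p_{C=1|00}, p_{C=1|11} > p_{C=1|01}, p_{C=1|10} > p_{C=1|00}), or if all four of these effects are strictly negative, then w_1·RD(1) + w_0·RD(0) < 0. (ii) If X has strictly positive effects on C at both levels of Y and Y has strictly negative effects on C at both levels of X, or vice versa, then w_1·RD(1) + w_0·RD(0) > 0. -/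

import Mathlib

open MeasureTheory ProbabilityTheory

variable {Ω : Type*} [MeasurableSpace Ω]

/-- The event that the random variable `X` takes the value `x`. -/
def ev (X : Ω → ℝ) (x : ℝ) : Set Ω := {ω | X ω = x}

/-- The probability of an event, as a real number. -/
noncomputable def pr (P : Measure Ω) (s : Set Ω) : ℝ := (P s).toReal

/-- The conditional probability `P(s | t)`, as a real number. -/
noncomputable def cpr (P : Measure Ω) (s t : Set Ω) : ℝ := pr (P[|t]) s

/-- The covariance of two real-valued random variables. -/
noncomputable def rcov (P : Measure Ω) (X Y : Ω → ℝ) : ℝ :=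
  ∫ ω, (X ω - ∫ ω', X ω' ∂P) * (Y ω - ∫ ω', Y ω' ∂P) ∂P

/-- The conditional covariance of two real-valued random variables given an event. -/
noncomputable def covCond (P : Measure Ω) (X Y : Ω → ℝ) (t : Set Ω) : ℝ :=
  rcov (P[|t]) X Y

/-- The conditional variance of a real-valued random variable given an event. -/
noncomputable def varCond (P : Measure Ω) (X : Ω → ℝ) (t : Set Ω) : ℝ :=
  covCond P X X t

/-- A measurable `{0,1}`-valued random variable. -/
def IsBin (X : Ω → ℝ) : Prop := Measurable X ∧ ∀ ω, X ω = 0 ∨ X ω = 1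

/-- The stratum-specific risk difference of `Y` comparing `X = 1` with `X = 0` within the
stratum `Z = z`. -/
noncomputable def strataRD (P : Measure Ω) (X Y Z : Ω → ℝ) (z : ℝ) : ℝ :=
  cpr P (ev Y 1) (ev X 1 ∩ ev Z z) - cpr P (ev Y 1) (ev X 0 ∩ ev Z z)

/-- The linear-regression weight of the stratum `Z = z`, proportional to
`var(X | Z = z) * P(Z = z)`. -/
noncomputable def strataW (P : Measure Ω) (X Z : Ω → ℝ) (z : ℝ) : ℝ :=
  varCond P X (ev Z z) * pr P (ev Z z) /
    (varCond P X (ev Z 1) * pr P (ev Z 1) + varCond P X (ev Z 0) * pr P (ev Z 0))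


/-! ### Auxiliary measure-theoretic lemmas -/

lemma IsBin.mset {X : Ω → ℝ} (hX : IsBin X) (x : ℝ) : MeasurableSet (ev X x) :=
  hX.1 (measurableSet_singleton x)

lemma pr_ne_zero {P : Measure Ω} {s : Set Ω} (h : 0 < pr P s) : P s ≠ 0 := by
  intro h0; simp [pr, h0] at h

lemma pr_univ (P : Measure Ω) [IsProbabilityMeasure P] : pr P Set.univ = 1 := by
  simp [pr]

lemma pr_split {Z : Ω → ℝ} (hZ : IsBin Z) (P : Measure Ω) [IsFiniteMeasure P] (s : Set Ω) :
    pr P s = pr P (s ∩ ev Z 1) + pr P (s ∩ ev Z 0) := by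
  have hdiff : s \ ev Z 1 = s ∩ ev Z 0 := by
    ext ω
    rcases hZ.2 ω with h | h <;> simp [ev, h]
  have h2 := measure_inter_add_diff (μ := P) s (hZ.mset 1)
  rw [hdiff] at h2
  rw [pr, pr, pr, ← h2, ENNReal.toReal_add (measure_ne_top _ _) (measure_ne_top _ _)]

lemma cpr_eq (P : Measure Ω) [IsFiniteMeasure P] {t : Set Ω} (ht : MeasurableSet t)
    (s : Set Ω) : cpr P s t = pr P (t ∩ s) / pr P t := by
  rw [cpr, pr, cond_apply ht, ENNReal.toReal_mul, ENNReal.toReal_inv]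
  rw [pr, pr, inv_mul_eq_div]

lemma pr_inter_eq_cpr_mul (P : Measure Ω) [IsFiniteMeasure P] {t : Set Ω}
    (ht : MeasurableSet t) (h0 : 0 < pr P t) (s : Set Ω) :
    pr P (t ∩ s) = cpr P s t * pr P t := by
  rw [cpr_eq P ht s, div_mul_cancel₀]
  exact ne_of_gt h0

lemma varCond_bin {X : Ω → ℝ} (hX : IsBin X) (P : Measure Ω) [IsProbabilityMeasure P]
    {t : Set Ω} (h0 : P t ≠ 0) :
    varCond P X t = cpr P (ev X 1) t * (1 - cpr P (ev X 1) t) := by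
  have hQ : IsProbabilityMeasure (P[|t]) := cond_isProbabilityMeasure h0
  set Q := P[|t] with hQdef
  have hm : MeasurableSet (ev X 1) := hX.mset 1
  have hXi : X = (ev X 1).indicator (fun _ => (1:ℝ)) := by
    funext ω
    rcases hX.2 ω with h | h <;> simp [Set.indicator_apply, ev, h]
  have hint : Integrable X Q := by
    rw [hXi]; exact (integrable_const (1:ℝ)).indicator hm
  have hmean : (∫ ω, X ω ∂Q) = cpr P (ev X 1) t := by
    conv_lhs => rw [hXi]
    rw [integral_indicator_const (1:ℝ) hm]
    simp [cpr, pr]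
    rfl
  show (∫ ω, (X ω - ∫ ω', X ω' ∂Q) * (X ω - ∫ ω', X ω' ∂Q) ∂Q) = _
  set m := ∫ ω', X ω' ∂Q with hmdef
  have hfun : (fun ω => (X ω - m) * (X ω - m)) = fun ω => (1 - 2*m) * X ω + m^2 := by
    funext ω
    rcases hX.2 ω with h | h <;> rw [h] <;> ring
  calc (∫ ω, (X ω - m) * (X ω - m) ∂Q) = ∫ ω, ((1 - 2*m) * X ω + m^2) ∂Q := by rw [hfun]
    _ = (1 - 2*m) * m + m^2 := by
        rw [integral_add (hint.const_mul _) (integrable_const _), integral_const_mul,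
          integral_const]
        simp [← hmdef]
    _ = cpr P (ev X 1) t * (1 - cpr P (ev X 1) t) := by rw [hmean]; ring

lemma indep_pr {X Y : Ω → ℝ} (P : Measure Ω) [IsProbabilityMeasure P]
    (hindep : IndepFun X Y P) (x y : ℝ) :
    pr P (ev X x ∩ ev Y y) = pr P (ev X x) * pr P (ev Y y) := by
  have h := hindep.measure_inter_preimage_eq_mul {x} {y}
    (measurableSet_singleton x) (measurableSet_singleton y)
  rw [pr, pr, pr]
  show (P (X ⁻¹' {x} ∩ Y ⁻¹' {y})).toReal = _
  rw [h, ENNReal.toReal_mul]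
  rfl

/-! ### Auxiliary algebraic lemmas -/

lemma key_identity (a b q11 q10 q01 q00 m11 m01 m10 m00 : ℝ)
    (hm11 : m11 = q11*(a*b) + q10*(a*(1-b)))
    (hm01 : m01 = q01*((1-a)*b) + q00*((1-a)*(1-b)))
    (hm10 : m10 = a - m11) (hm00 : m00 = (1-a) - m01) :
    (m01*(q11*(a*b)) - m11*(q01*((1-a)*b)))*(m10+m00)
      + (m00*(a*b - q11*(a*b)) - m10*((1-a)*b - q01*((1-a)*b)))*(m11+m01)
    = -(a*(1-a)*b*(1-b)) *
        (a*b*((q11-q10)*(q11-q01)) + a*(1-b)*((q11-q10)*(q10-q00))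
          + (1-a)*b*((q11-q01)*(q01-q00)) + (1-a)*(1-b)*((q10-q00)*(q01-q00))) := by
  subst hm10 hm00 hm11 hm01
  ring

lemma bias_neg (V1 V0 P1 P0 R1 R0 m11 m01 m10 m00 e11 e01 e10 e00 : ℝ)
    (pm11 : 0 < m11) (pm01 : 0 < m01) (pm10 : 0 < m10) (pm00 : 0 < m00)
    (hP1 : P1 = m11 + m01) (hP0 : P0 = m10 + m00)
    (hV1 : V1 = m11/P1 * (1 - m11/P1)) (hV0 : V0 = m10/P0 * (1 - m10/P0))
    (hR1 : R1 = e11/m11 - e01/m01) (hR0 : R0 = e10/m10 - e00/m00)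
    (hkey : (m01*e11 - m11*e01)*P0 + (m00*e10 - m10*e00)*P1 < 0) :
    V1*P1/(V1*P1 + V0*P0) * R1 + V0*P0/(V1*P1 + V0*P0) * R0 < 0 := by
  have h1 : 0 < P1 := by rw [hP1]; linarith
  have h0 : 0 < P0 := by rw [hP0]; linarith
  have hV1P : V1 * P1 = m11*m01/P1 := by
    rw [hV1, hP1]; field_simp; ring
  have hV0P : V0 * P0 = m10*m00/P0 := by
    rw [hV0, hP0]; field_simp; ring
  have hD : 0 < V1*P1 + V0*P0 := by
    rw [hV1P, hV0P]
    exact add_pos (div_pos (mul_pos pm11 pm01) h1) (div_pos (mul_pos pm10 pm00) h0)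
  have hL : V1*P1/(V1*P1 + V0*P0) * R1 + V0*P0/(V1*P1 + V0*P0) * R0
      = (V1*P1*R1 + V0*P0*R0) / (V1*P1 + V0*P0) := by ring
  have hnum : V1*P1*R1 + V0*P0*R0
      = ((m01*e11 - m11*e01)*P0 + (m00*e10 - m10*e00)*P1) / (P1*P0) := by
    rw [hV1P, hV0P, hR1, hR0]
    field_simp
  rw [hL, hnum]
  exact div_neg_of_neg_of_pos (div_neg_of_neg_of_pos hkey (mul_pos h1 h0)) hD

lemma bias_pos (V1 V0 P1 P0 R1 R0 m11 m01 m10 m00 e11 e01 e10 e00 : ℝ)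
    (pm11 : 0 < m11) (pm01 : 0 < m01) (pm10 : 0 < m10) (pm00 : 0 < m00)
    (hP1 : P1 = m11 + m01) (hP0 : P0 = m10 + m00)
    (hV1 : V1 = m11/P1 * (1 - m11/P1)) (hV0 : V0 = m10/P0 * (1 - m10/P0))
    (hR1 : R1 = e11/m11 - e01/m01) (hR0 : R0 = e10/m10 - e00/m00)
    (hkey : 0 < (m01*e11 - m11*e01)*P0 + (m00*e10 - m10*e00)*P1) :
    0 < V1*P1/(V1*P1 + V0*P0) * R1 + V0*P0/(V1*P1 + V0*P0) * R0 := by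
  have h := bias_neg V1 V0 P1 P0 (-R1) (-R0) m11 m01 m10 m00 (-e11) (-e01) (-e10) (-e00)
    pm11 pm01 pm10 pm00 hP1 hP0 hV1 hV0 (by rw [hR1]; ring) (by rw [hR0]; ring)
    (by linarith [hkey])
  linarith [h]

lemma weighted_pos (a b T11 T10 T01 T00 : ℝ) (pa : 0 < a) (pa' : a < 1)
    (pb : 0 < b) (pb' : b < 1)
    (h11 : 0 < T11) (h10 : 0 < T10) (h01 : 0 < T01) (h00 : 0 < T00) :
    0 < a*b*T11 + a*(1-b)*T10 + (1-a)*b*T01 + (1-a)*(1-b)*T00 :=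
  add_pos (add_pos (add_pos
    (mul_pos (mul_pos pa pb) h11)
    (mul_pos (mul_pos pa (by linarith)) h10))
    (mul_pos (mul_pos (by linarith : (0:ℝ) < 1-a) pb) h01))
    (mul_pos (mul_pos (by linarith : (0:ℝ) < 1-a) (by linarith : (0:ℝ) < 1-b)) h00)

lemma weighted_neg (a b T11 T10 T01 T00 : ℝ) (pa : 0 < a) (pa' : a < 1)
    (pb : 0 < b) (pb' : b < 1)
    (h11 : T11 < 0) (h10 : T10 < 0) (h01 : T01 < 0) (h00 : T00 < 0) :
    a*b*T11 + a*(1-b)*T10 + (1-a)*b*T01 + (1-a)*(1-b)*T00 < 0 := by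
  have := weighted_pos a b (-T11) (-T10) (-T01) (-T00) pa pa' pb pb'
    (by linarith) (by linarith) (by linarith) (by linarith)
  nlinarith [this]

lemma neg_prod_lt_zero (c S : ℝ) (hc : 0 < c) (hS : 0 < S) : -c * S < 0 := by nlinarith

lemma neg_prod_gt_zero (c S : ℝ) (hc : 0 < c) (hS : S < 0) : 0 < -c * S := by nlinarith

/-- The sign of V-bias due to linear regression adjustment for `C`: (i) negative when the
effects of `X` and `Y` on `C` are in the same direction; (ii) positive when they are in
opposite directions. -/
theorem V_bias_lm_sign (P : Measure Ω) [IsProbabilityMeasure P]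
    (X Y C : Ω → ℝ) (hX : IsBin X) (hY : IsBin Y) (hC : IsBin C)
    (hindep : IndepFun X Y P)
    (hX1 : 0 < pr P (ev X 1)) (hX1' : pr P (ev X 1) < 1)
    (hY1 : 0 < pr P (ev Y 1)) (hY1' : pr P (ev Y 1) < 1)
    (hXC : ∀ x c : ℝ, (x = 0 ∨ x = 1) → (c = 0 ∨ c = 1) → 0 < pr P (ev X x ∩ ev C c)) :
    (((cpr P (ev C 1) (ev X 1 ∩ ev Y 1) > cpr P (ev C 1) (ev X 1 ∩ ev Y 0) ∧
        cpr P (ev C 1) (ev X 0 ∩ ev Y 1) > cpr P (ev C 1) (ev X 0 ∩ ev Y 0) ∧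
        cpr P (ev C 1) (ev X 1 ∩ ev Y 1) > cpr P (ev C 1) (ev X 0 ∩ ev Y 1) ∧
        cpr P (ev C 1) (ev X 1 ∩ ev Y 0) > cpr P (ev C 1) (ev X 0 ∩ ev Y 0)) ∨
      (cpr P (ev C 1) (ev X 1 ∩ ev Y 1) < cpr P (ev C 1) (ev X 1 ∩ ev Y 0) ∧
        cpr P (ev C 1) (ev X 0 ∩ ev Y 1) < cpr P (ev C 1) (ev X 0 ∩ ev Y 0) ∧
        cpr P (ev C 1) (ev X 1 ∩ ev Y 1) < cpr P (ev C 1) (ev X 0 ∩ ev Y 1) ∧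
        cpr P (ev C 1) (ev X 1 ∩ ev Y 0) < cpr P (ev C 1) (ev X 0 ∩ ev Y 0))) →
      strataW P X C 1 * strataRD P X Y C 1 + strataW P X C 0 * strataRD P X Y C 0 < 0) ∧
    (((cpr P (ev C 1) (ev X 1 ∩ ev Y 1) > cpr P (ev C 1) (ev X 0 ∩ ev Y 1) ∧
        cpr P (ev C 1) (ev X 1 ∩ ev Y 0) > cpr P (ev C 1) (ev X 0 ∩ ev Y 0) ∧
        cpr P (ev C 1) (ev X 1 ∩ ev Y 1) < cpr P (ev C 1) (ev X 1 ∩ ev Y 0) ∧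
        cpr P (ev C 1) (ev X 0 ∩ ev Y 1) < cpr P (ev C 1) (ev X 0 ∩ ev Y 0)) ∨
      (cpr P (ev C 1) (ev X 1 ∩ ev Y 1) < cpr P (ev C 1) (ev X 0 ∩ ev Y 1) ∧
        cpr P (ev C 1) (ev X 1 ∩ ev Y 0) < cpr P (ev C 1) (ev X 0 ∩ ev Y 0) ∧
        cpr P (ev C 1) (ev X 1 ∩ ev Y 1) > cpr P (ev C 1) (ev X 1 ∩ ev Y 0) ∧
        cpr P (ev C 1) (ev X 0 ∩ ev Y 1) > cpr P (ev C 1) (ev X 0 ∩ ev Y 0))) →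
      strataW P X C 1 * strataRD P X Y C 1 + strataW P X C 0 * strataRD P X Y C 0 > 0) := by
  set a := pr P (ev X 1) with hadef
  set b := pr P (ev Y 1) with hbdef
  set q11 := cpr P (ev C 1) (ev X 1 ∩ ev Y 1) with hq11def
  set q10 := cpr P (ev C 1) (ev X 1 ∩ ev Y 0) with hq10def
  set q01 := cpr P (ev C 1) (ev X 0 ∩ ev Y 1) with hq01def
  set q00 := cpr P (ev C 1) (ev X 0 ∩ ev Y 0) with hq00def
  have pa : 0 < a := hX1
  have pa' : a < 1 := hX1'
  have pb : 0 < b := hY1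
  have pb' : b < 1 := hY1'
  -- complements of marginals
  have hX0 : pr P (ev X 0) = 1 - a := by
    have h := pr_split hX P Set.univ
    rw [Set.univ_inter, Set.univ_inter, pr_univ, ← hadef] at h
    linarith
  have hY0 : pr P (ev Y 0) = 1 - b := by
    have h := pr_split hY P Set.univ
    rw [Set.univ_inter, Set.univ_inter, pr_univ, ← hbdef] at h
    linarith
  -- products
  have hr11 : pr P (ev X 1 ∩ ev Y 1) = a * b := by
    rw [indep_pr P hindep 1 1, ← hadef, ← hbdef]
  have hr10 : pr P (ev X 1 ∩ ev Y 0) = a * (1-b) := by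
    rw [indep_pr P hindep 1 0, ← hadef, hY0]
  have hr01 : pr P (ev X 0 ∩ ev Y 1) = (1-a) * b := by
    rw [indep_pr P hindep 0 1, ← hbdef, hX0]
  have hr00 : pr P (ev X 0 ∩ ev Y 0) = (1-a) * (1-b) := by
    rw [indep_pr P hindep 0 0, hX0, hY0]
  -- joint probabilities with C = 1
  have hj11 : pr P ((ev X 1 ∩ ev Y 1) ∩ ev C 1) = q11 * (a*b) := by
    rw [pr_inter_eq_cpr_mul P ((hX.mset 1).inter (hY.mset 1))
      (by rw [hr11]; exact mul_pos pa pb) (ev C 1), hr11, ← hq11def]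
  have hj10 : pr P ((ev X 1 ∩ ev Y 0) ∩ ev C 1) = q10 * (a*(1-b)) := by
    rw [pr_inter_eq_cpr_mul P ((hX.mset 1).inter (hY.mset 0))
      (by rw [hr10]; exact mul_pos pa (by linarith)) (ev C 1), hr10, ← hq10def]
  have hj01 : pr P ((ev X 0 ∩ ev Y 1) ∩ ev C 1) = q01 * ((1-a)*b) := by
    rw [pr_inter_eq_cpr_mul P ((hX.mset 0).inter (hY.mset 1))
      (by rw [hr01]; exact mul_pos (by linarith) pb) (ev C 1), hr01, ← hq01def]
  have hj00 : pr P ((ev X 0 ∩ ev Y 0) ∩ ev C 1) = q00 * ((1-a)*(1-b)) := by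
    rw [pr_inter_eq_cpr_mul P ((hX.mset 0).inter (hY.mset 0))
      (by rw [hr00]; exact mul_pos (by linarith) (by linarith)) (ev C 1), hr00, ← hq00def]
  -- joint probabilities with C = 0 (for Y = 1)
  have hc11 : pr P ((ev X 1 ∩ ev Y 1) ∩ ev C 0) = a*b - q11*(a*b) := by
    have h := pr_split hC P (ev X 1 ∩ ev Y 1)
    rw [hr11, hj11] at h
    linarith
  have hc01 : pr P ((ev X 0 ∩ ev Y 1) ∩ ev C 0) = (1-a)*b - q01*((1-a)*b) := by
    have h := pr_split hC P (ev X 0 ∩ ev Y 1)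
    rw [hr01, hj01] at h
    linarith
  -- the m's
  have hm11e : pr P (ev X 1 ∩ ev C 1) = q11*(a*b) + q10*(a*(1-b)) := by
    rw [pr_split hY P (ev X 1 ∩ ev C 1),
      Set.inter_right_comm (ev X 1) (ev C 1) (ev Y 1),
      Set.inter_right_comm (ev X 1) (ev C 1) (ev Y 0), hj11, hj10]
  have hm01e : pr P (ev X 0 ∩ ev C 1) = q01*((1-a)*b) + q00*((1-a)*(1-b)) := by
    rw [pr_split hY P (ev X 0 ∩ ev C 1),
      Set.inter_right_comm (ev X 0) (ev C 1) (ev Y 1),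
      Set.inter_right_comm (ev X 0) (ev C 1) (ev Y 0), hj01, hj00]
  have hm10e : pr P (ev X 1 ∩ ev C 0) = a - pr P (ev X 1 ∩ ev C 1) := by
    have h := pr_split hC P (ev X 1)
    rw [← hadef] at h
    linarith
  have hm00e : pr P (ev X 0 ∩ ev C 0) = (1-a) - pr P (ev X 0 ∩ ev C 1) := by
    have h := pr_split hC P (ev X 0)
    rw [hX0] at h
    linarith
  -- positivity of the m's
  have pm11 : 0 < pr P (ev X 1 ∩ ev C 1) := hXC 1 1 (Or.inr rfl) (Or.inr rfl)
  have pm01 : 0 < pr P (ev X 0 ∩ ev C 1) := hXC 0 1 (Or.inl rfl) (Or.inr rfl)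
  have pm10 : 0 < pr P (ev X 1 ∩ ev C 0) := hXC 1 0 (Or.inr rfl) (Or.inl rfl)
  have pm00 : 0 < pr P (ev X 0 ∩ ev C 0) := hXC 0 0 (Or.inl rfl) (Or.inl rfl)
  -- marginals of C
  have hP1 : pr P (ev C 1) = pr P (ev X 1 ∩ ev C 1) + pr P (ev X 0 ∩ ev C 1) := by
    rw [pr_split hX P (ev C 1), Set.inter_comm (ev C 1) (ev X 1),
      Set.inter_comm (ev C 1) (ev X 0)]
  have hP0 : pr P (ev C 0) = pr P (ev X 1 ∩ ev C 0) + pr P (ev X 0 ∩ ev C 0) := by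
    rw [pr_split hX P (ev C 0), Set.inter_comm (ev C 0) (ev X 1),
      Set.inter_comm (ev C 0) (ev X 0)]
  have hPC1pos : 0 < pr P (ev C 1) := by rw [hP1]; linarith
  have hPC0pos : 0 < pr P (ev C 0) := by rw [hP0]; linarith
  -- conditional variances
  have hV1 : varCond P X (ev C 1)
      = pr P (ev X 1 ∩ ev C 1) / pr P (ev C 1)
        * (1 - pr P (ev X 1 ∩ ev C 1) / pr P (ev C 1)) := by
    rw [varCond_bin hX P (pr_ne_zero hPC1pos), cpr_eq P (hC.mset 1) (ev X 1),
      Set.inter_comm (ev C 1) (ev X 1)]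
  have hV0 : varCond P X (ev C 0)
      = pr P (ev X 1 ∩ ev C 0) / pr P (ev C 0)
        * (1 - pr P (ev X 1 ∩ ev C 0) / pr P (ev C 0)) := by
    rw [varCond_bin hX P (pr_ne_zero hPC0pos), cpr_eq P (hC.mset 0) (ev X 1),
      Set.inter_comm (ev C 0) (ev X 1)]
  -- risk differences
  have hR1 : strataRD P X Y C 1
      = (q11*(a*b)) / pr P (ev X 1 ∩ ev C 1) - (q01*((1-a)*b)) / pr P (ev X 0 ∩ ev C 1) := by
    show cpr P (ev Y 1) (ev X 1 ∩ ev C 1) - cpr P (ev Y 1) (ev X 0 ∩ ev C 1) = _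
    rw [cpr_eq P ((hX.mset 1).inter (hC.mset 1)) (ev Y 1),
      cpr_eq P ((hX.mset 0).inter (hC.mset 1)) (ev Y 1),
      Set.inter_right_comm (ev X 1) (ev C 1) (ev Y 1),
      Set.inter_right_comm (ev X 0) (ev C 1) (ev Y 1), hj11, hj01]
  have hR0 : strataRD P X Y C 0
      = (a*b - q11*(a*b)) / pr P (ev X 1 ∩ ev C 0)
        - ((1-a)*b - q01*((1-a)*b)) / pr P (ev X 0 ∩ ev C 0) := by
    show cpr P (ev Y 1) (ev X 1 ∩ ev C 0) - cpr P (ev Y 1) (ev X 0 ∩ ev C 0) = _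
    rw [cpr_eq P ((hX.mset 1).inter (hC.mset 0)) (ev Y 1),
      cpr_eq P ((hX.mset 0).inter (hC.mset 0)) (ev Y 1),
      Set.inter_right_comm (ev X 1) (ev C 0) (ev Y 1),
      Set.inter_right_comm (ev X 0) (ev C 0) (ev Y 1), hc11, hc01]
  have hab : 0 < a*(1-a)*b*(1-b) := by
    have h1 : (0:ℝ) < 1 - a := by linarith
    have h2 : (0:ℝ) < 1 - b := by linarith
    positivity
  constructor
  · rintro (⟨h1, h2, h3, h4⟩ | ⟨h1, h2, h3, h4⟩)
    · have hS := weighted_pos a b _ _ _ _ pa pa' pb pb'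
        (mul_pos (sub_pos.2 h1) (sub_pos.2 h3))
        (mul_pos (sub_pos.2 h1) (sub_pos.2 h4))
        (mul_pos (sub_pos.2 h3) (sub_pos.2 h2))
        (mul_pos (sub_pos.2 h4) (sub_pos.2 h2))
      have hkey : (pr P (ev X 0 ∩ ev C 1) * (q11*(a*b))
            - pr P (ev X 1 ∩ ev C 1) * (q01*((1-a)*b))) * pr P (ev C 0)
          + (pr P (ev X 0 ∩ ev C 0) * (a*b - q11*(a*b))
            - pr P (ev X 1 ∩ ev C 0) * ((1-a)*b - q01*((1-a)*b))) * pr P (ev C 1) < 0 := by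
        rw [hP1, hP0, key_identity a b q11 q10 q01 q00 _ _ _ _ hm11e hm01e hm10e hm00e]
        exact neg_prod_lt_zero _ _ hab hS
      exact bias_neg _ _ _ _ _ _ _ _ _ _ _ _ _ _
        pm11 pm01 pm10 pm00 hP1 hP0 hV1 hV0 hR1 hR0 hkey
    · have hS := weighted_pos a b _ _ _ _ pa pa' pb pb'
        (mul_pos_of_neg_of_neg (sub_neg.2 h1) (sub_neg.2 h3))
        (mul_pos_of_neg_of_neg (sub_neg.2 h1) (sub_neg.2 h4))
        (mul_pos_of_neg_of_neg (sub_neg.2 h3) (sub_neg.2 h2))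
        (mul_pos_of_neg_of_neg (sub_neg.2 h4) (sub_neg.2 h2))
      have hkey : (pr P (ev X 0 ∩ ev C 1) * (q11*(a*b))
            - pr P (ev X 1 ∩ ev C 1) * (q01*((1-a)*b))) * pr P (ev C 0)
          + (pr P (ev X 0 ∩ ev C 0) * (a*b - q11*(a*b))
            - pr P (ev X 1 ∩ ev C 0) * ((1-a)*b - q01*((1-a)*b))) * pr P (ev C 1) < 0 := by
        rw [hP1, hP0, key_identity a b q11 q10 q01 q00 _ _ _ _ hm11e hm01e hm10e hm00e]
        exact neg_prod_lt_zero _ _ hab hS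
      exact bias_neg _ _ _ _ _ _ _ _ _ _ _ _ _ _
        pm11 pm01 pm10 pm00 hP1 hP0 hV1 hV0 hR1 hR0 hkey
  · rintro (⟨h1, h2, h3, h4⟩ | ⟨h1, h2, h3, h4⟩)
    · have hS := weighted_neg a b _ _ _ _ pa pa' pb pb'
        (mul_neg_of_neg_of_pos (sub_neg.2 h3) (sub_pos.2 h1))
        (mul_neg_of_neg_of_pos (sub_neg.2 h3) (sub_pos.2 h2))
        (mul_neg_of_pos_of_neg (sub_pos.2 h1) (sub_neg.2 h4))
        (mul_neg_of_pos_of_neg (sub_pos.2 h2) (sub_neg.2 h4))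
      have hkey : 0 < (pr P (ev X 0 ∩ ev C 1) * (q11*(a*b))
            - pr P (ev X 1 ∩ ev C 1) * (q01*((1-a)*b))) * pr P (ev C 0)
          + (pr P (ev X 0 ∩ ev C 0) * (a*b - q11*(a*b))
            - pr P (ev X 1 ∩ ev C 0) * ((1-a)*b - q01*((1-a)*b))) * pr P (ev C 1) := by
        rw [hP1, hP0, key_identity a b q11 q10 q01 q00 _ _ _ _ hm11e hm01e hm10e hm00e]
        exact neg_prod_gt_zero _ _ hab hS
      exact bias_pos _ _ _ _ _ _ _ _ _ _ _ _ _ _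
        pm11 pm01 pm10 pm00 hP1 hP0 hV1 hV0 hR1 hR0 hkey
    · have hS := weighted_neg a b _ _ _ _ pa pa' pb pb'
        (mul_neg_of_pos_of_neg (sub_pos.2 h3) (sub_neg.2 h1))
        (mul_neg_of_pos_of_neg (sub_pos.2 h3) (sub_neg.2 h2))
        (mul_neg_of_neg_of_pos (sub_neg.2 h1) (sub_pos.2 h4))
        (mul_neg_of_neg_of_pos (sub_neg.2 h2) (sub_pos.2 h4))
      have hkey : 0 < (pr P (ev X 0 ∩ ev C 1) * (q11*(a*b))
            - pr P (ev X 1 ∩ ev C 1) * (q01*((1-a)*b))) * pr P (ev C 0)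
          + (pr P (ev X 0 ∩ ev C 0) * (a*b - q11*(a*b))
            - pr P (ev X 1 ∩ ev C 0) * ((1-a)*b - q01*((1-a)*b))) * pr P (ev C 1) := by
        rw [hP1, hP0, key_identity a b q11 q10 q01 q00 _ _ _ _ hm11e hm01e hm10e hm00e]
        exact neg_prod_gt_zero _ _ hab hS
      exact bias_pos _ _ _ _ _ _ _ _ _ _ _ _ _ _
        pm11 pm01 pm10 pm00 hP1 hP0 hV1 hV0 hR1 hR0 hkey
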